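/- arXiv:2003.10193 — 2 statements merged into one kernel-verified Lean document; each statement's English description precedes it below -/
import Mathlib

section
/- The asymptotic means of the splitting schemes satisfy $\mathbb{E}[\widetilde{Y}^{L2}_\infty] = \mathbb{E}[\widetilde{Y}^{L1}_\infty] e^{\Delta/\tau}$, $\mathbb{E}[\widetilde{Y}^{S1}_\infty] = \frac{1}{2}\mathbb{E}[\widetilde{Y}^{L1}_\infty](1+e^{\Delta/\tau})$, and $\mathbb{E}[\widetilde{Y}^{S2}_\infty] = \mathbb{E}[\widetilde{Y}^{L1}_\infty] e^{\Delta/2\tau}$, where $\mathbb{E}[\widetilde{Y}^{L1}_\infty] = \mu\tau\frac{\Delta/\tau}{e^{\Delta/\tau}-1}$. -/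
open MeasureTheory ProbabilityTheory Filter Real

open scoped NNReal ENNReal

section Auxiliary

lemma gauss_key (t : ℝ) (v : ℝ≥0) (hv : v ≠ 0) :
    (fun x => rexp (t * x) * gaussianPDFReal 0 v x)
      = fun x => rexp (t ^ 2 * v / 2) * gaussianPDFReal (t * v) v x := by
  have hv' : (0 : ℝ) < v := lt_of_le_of_ne (by positivity) (by exact_mod_cast hv.symm)
  funext x
  simp only [gaussianPDFReal, sub_zero]
  rw [show rexp (t*x) * ((Real.sqrt (2*π*v))⁻¹ * rexp (-x^2/(2*v)))
      = (Real.sqrt (2*π*v))⁻¹ * (rexp (t*x) * rexp (-x^2/(2*v))) by ring,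
    show rexp (t^2*v/2) * ((Real.sqrt (2*π*v))⁻¹ * rexp (-(x - t*v)^2/(2*v)))
      = (Real.sqrt (2*π*v))⁻¹ * (rexp (t^2*v/2) * rexp (-(x - t*v)^2/(2*v))) by ring,
    ← Real.exp_add, ← Real.exp_add]
  congr 1
  field_simp
  ring

lemma gauss_exp_integrable (t : ℝ) (v : ℝ≥0) (hv : v ≠ 0) :
    Integrable (fun x => rexp (t * x)) (gaussianReal 0 v) := by
  rw [gaussianReal_of_var_ne_zero _ hv]
  rw [integrable_withDensity_iff (measurable_gaussianPDF _ _)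
    (Filter.Eventually.of_forall fun x => ENNReal.ofReal_lt_top)]
  have : (fun x => rexp (t * x) * (gaussianPDF 0 v x).toReal)
      = fun x => rexp (t ^ 2 * v / 2) * gaussianPDFReal (t * v) v x := by
    rw [← gauss_key t v hv]
    funext x
    rw [gaussianPDF, ENNReal.toReal_ofReal (gaussianPDFReal_nonneg _ _ _)]
  rw [this]
  exact (integrable_gaussianPDFReal _ _).const_mul _

lemma gauss_exp_integral (t : ℝ) (v : ℝ≥0) (hv : v ≠ 0) :
    ∫ x, rexp (t * x) ∂(gaussianReal 0 v) = rexp (t ^ 2 * v / 2) := by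
  rw [gaussianReal_of_var_ne_zero _ hv]
  have hpdf : gaussianPDF 0 v = fun x => ((gaussianPDFReal 0 v x).toNNReal : ℝ≥0∞) := rfl
  rw [hpdf, integral_withDensity_eq_integral_smul
    (by exact (measurable_gaussianPDFReal 0 v).real_toNNReal)]
  have : (fun x => (gaussianPDFReal 0 v x).toNNReal • rexp (t * x))
      = fun x => rexp (t ^ 2 * v / 2) * gaussianPDFReal (t * v) v x := by
    rw [← gauss_key t v hv]
    funext x
    rw [NNReal.smul_def, Real.coe_toNNReal _ (gaussianPDFReal_nonneg _ _ _), smul_eq_mul]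
    ring
  rw [this, integral_const_mul, integral_gaussianPDFReal_eq_one _ hv, mul_one]

variable {Ω : Type*} [m0 : MeasurableSpace Ω] {μ : Measure Ω}

lemma exp_shift_integrable {X : Ω → ℝ} (hX : Measurable X) {v : ℝ≥0}
    (hmap : Measure.map X μ = gaussianReal 0 v) (hv : v ≠ 0) (c t : ℝ) :
    Integrable (fun ω => rexp (c + t * X ω)) μ := by
  have h : Integrable (fun x => rexp (t * x)) (Measure.map X μ) := by
    rw [hmap]; exact gauss_exp_integrable t v hv
  replace h : Integrable (fun ω => rexp (t * X ω)) μ :=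
    (integrable_map_measure (Real.measurable_exp.comp
      (measurable_const_mul t)).aestronglyMeasurable hX.aemeasurable).mp h
  have := h.const_mul (rexp c)
  refine this.congr (Filter.Eventually.of_forall fun ω => ?_)
  simp [← Real.exp_add]

lemma exp_shift_integral [IsProbabilityMeasure μ] {X : Ω → ℝ} (hX : Measurable X) {v : ℝ≥0}
    (hmap : Measure.map X μ = gaussianReal 0 v) (hv : v ≠ 0) (c t : ℝ) :
    ∫ ω, rexp (c + t * X ω) ∂μ = rexp (c + t ^ 2 * v / 2) := by
  have h : ∫ ω, rexp (t * X ω) ∂μ = rexp (t ^ 2 * v / 2) := by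
    rw [← gauss_exp_integral t v hv, ← hmap]
    exact (integral_map hX.aemeasurable (Real.measurable_exp.comp
      (measurable_const_mul t)).aestronglyMeasurable).symm
  calc ∫ ω, rexp (c + t * X ω) ∂μ = ∫ ω, rexp c * rexp (t * X ω) ∂μ := by
        congr 1; funext ω; rw [← Real.exp_add]
    _ = rexp c * ∫ ω, rexp (t * X ω) ∂μ := integral_const_mul _ _
    _ = rexp (c + t ^ 2 * v / 2) := by rw [h, ← Real.exp_add]

lemma rec_mean (μ : Measure Ω) [IsProbabilityMeasure μ]
    (m : ℕ → MeasurableSpace Ω) (hle : ∀ i, m i ≤ m0)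
    (hindep : ∀ i, Indep (⨆ j ∈ Finset.range i, m j) (m i) μ)
    (g h : ℕ → Ω → ℝ) (a c y0 L : ℝ) (hL : c = L * (1 - a))
    (hgm : ∀ i, Measurable[m i] (g i)) (hhm : ∀ i, Measurable[m i] (h i))
    (hgint : ∀ i, Integrable (g i) μ) (hhint : ∀ i, Integrable (h i) μ)
    (hge : ∀ i, ∫ ω, g i ω ∂μ = a) (hhe : ∀ i, ∫ ω, h i ω ∂μ = c)
    (Y : ℕ → Ω → ℝ) (h0 : ∀ ω, Y 0 ω = y0)
    (hrec : ∀ i ω, Y (i + 1) ω = Y i ω * g i ω + h i ω) :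
    ∀ i, Measurable[⨆ j ∈ Finset.range i, m j] (Y i) ∧ Integrable (Y i) μ ∧
      ∫ ω, Y i ω ∂μ = a ^ i * (y0 - L) + L := by
  intro i
  induction i with
  | zero =>
      have hY0 : Y 0 = fun _ => y0 := funext h0
      refine ⟨by rw [hY0]; exact measurable_const, by rw [hY0]; exact integrable_const _, ?_⟩
      rw [hY0]; simp
  | succ i ih =>
      obtain ⟨hYm, hYint, hYE⟩ := ih
      have hMle : (⨆ j ∈ Finset.range i, m j) ≤ m0 := iSup₂_le fun j _ => hle j
      have hIF : IndepFun (Y i) (g i) μ :=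
        indep_of_indep_of_le_right (indep_of_indep_of_le_left (hindep i) hYm.comap_le)
          (hgm i).comap_le
      have hmulint : Integrable (fun ω => Y i ω * g i ω) μ :=
        hIF.integrable_mul hYint (hgint i)
      have hYeq : Y (i + 1) = fun ω => Y i ω * g i ω + h i ω := funext (hrec i)
      have hmi : m i ≤ ⨆ j ∈ Finset.range (i + 1), m j :=
        le_biSup m (Finset.self_mem_range_succ i)
      have hMle' : (⨆ j ∈ Finset.range i, m j) ≤ ⨆ j ∈ Finset.range (i + 1), m j :=
        iSup₂_le fun j hj => le_biSup m (Finset.mem_range.mpr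
          (lt_trans (Finset.mem_range.mp hj) (Nat.lt_succ_self i)))
      refine ⟨?_, ?_, ?_⟩
      · rw [hYeq]
        exact ((hYm.mono hMle' le_rfl).mul ((hgm i).mono hmi le_rfl)).add
          ((hhm i).mono hmi le_rfl)
      · rw [hYeq]; exact hmulint.add (hhint i)
      · have hmul := hIF.integral_fun_mul_eq_mul_integral hYint.aestronglyMeasurable (hgint i).aestronglyMeasurable
        have hmul' : (∫ ω, Y i ω * g i ω ∂μ) = (∫ ω, Y i ω ∂μ) * ∫ ω, g i ω ∂μ := hmul
        rw [hYeq, integral_add hmulint (hhint i), hmul', hYE, hge i, hhe i, hL]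
        ring

lemma tendsto_aux {a y0 L : ℝ} (ha0 : 0 ≤ a) (ha1 : a < 1) :
    Tendsto (fun i : ℕ => a ^ i * (y0 - L) + L) atTop (nhds L) := by
  have h := tendsto_pow_atTop_nhds_zero_of_lt_one ha0 ha1
  simpa using (h.mul_const (y0 - L)).add_const L

end Auxiliary

/-- The asymptotic means of the splitting schemes satisfy
`E[Y^{L2}_∞] = E[Y^{L1}_∞] e^{Δ/τ}`, `E[Y^{S1}_∞] = ½ E[Y^{L1}_∞](1 + e^{Δ/τ})` and
`E[Y^{S2}_∞] = E[Y^{L1}_∞] e^{Δ/(2τ)}`, where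
`E[Y^{L1}_∞] = μ'τ (Δ/τ)/(e^{Δ/τ} - 1)`. -/
theorem splitting_asymptotic_means
    {Ω : Type*} [MeasurableSpace Ω] (μ : Measure Ω) [IsProbabilityMeasure μ]
    (ξ φ ψ : ℕ → Ω → ℝ) (τ σ μ' y0 : ℝ) (Δ : NNReal)
    (hτ : 0 < τ) (hσ : 0 < σ) (hΔ : 0 < (Δ : ℝ))
    (hmeasξ : ∀ i, Measurable (ξ i))
    (hmeasφ : ∀ i, Measurable (φ i)) (hmeasψ : ∀ i, Measurable (ψ i))
    (hindepξ : iIndepFun ξ μ)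
    (hindepφψ : iIndepFun
      (fun p : ℕ × Bool => if p.2 then φ p.1 else ψ p.1) μ)
    (hgaussξ : ∀ i, Measure.map (ξ i) μ = gaussianReal 0 Δ)
    (hgaussφ : ∀ i, Measure.map (φ i) μ = gaussianReal 0 (Δ / 2))
    (hgaussψ : ∀ i, Measure.map (ψ i) μ = gaussianReal 0 (Δ / 2))
    (YL2 YS1 YS2 : ℕ → Ω → ℝ)
    (hL20 : ∀ ω, YL2 0 ω = y0) (hS10 : ∀ ω, YS1 0 ω = y0) (hS20 : ∀ ω, YS2 0 ω = y0)
    (hL2rec : ∀ i ω, YL2 (i + 1) ω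
      = YL2 i ω * exp (-(1 / τ + σ ^ 2 / 2) * (Δ : ℝ) + σ * ξ i ω) + μ' * (Δ : ℝ))
    (hS1rec : ∀ i ω, YS1 (i + 1) ω
      = (YS1 i ω + μ' * (Δ : ℝ) / 2) * exp (-(1 / τ + σ ^ 2 / 2) * (Δ : ℝ) + σ * ξ i ω)
        + μ' * (Δ : ℝ) / 2)
    (hS2rec : ∀ i ω, YS2 (i + 1) ω
      = YS2 i ω * exp (-(1 / τ + σ ^ 2 / 2) * (Δ : ℝ) + σ * (φ i ω + ψ i ω))
        + μ' * (Δ : ℝ) * exp (-(1 / τ + σ ^ 2 / 2) * ((Δ : ℝ) / 2) + σ * ψ i ω)) :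
    Tendsto (fun i : ℕ => μ[YL2 i]) atTop
        (nhds (μ' * τ * (((Δ : ℝ) / τ) / (exp ((Δ : ℝ) / τ) - 1)) * exp ((Δ : ℝ) / τ)))
      ∧ Tendsto (fun i : ℕ => μ[YS1 i]) atTop
        (nhds (1 / 2 * (μ' * τ * (((Δ : ℝ) / τ) / (exp ((Δ : ℝ) / τ) - 1)))
          * (1 + exp ((Δ : ℝ) / τ))))
      ∧ Tendsto (fun i : ℕ => μ[YS2 i]) atTop
        (nhds (μ' * τ * (((Δ : ℝ) / τ) / (exp ((Δ : ℝ) / τ) - 1))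
          * exp ((Δ : ℝ) / (2 * τ)))) := by
  have hτ0 : τ ≠ 0 := hτ.ne'
  have hΔne : Δ ≠ 0 := NNReal.coe_ne_zero.mp hΔ.ne'
  have hv2 : Δ / 2 ≠ 0 := div_ne_zero hΔne two_ne_zero
  have hv2c : ((Δ / 2 : ℝ≥0) : ℝ) = (Δ : ℝ) / 2 := by push_cast; ring
  set c0 : ℝ := -(1 / τ + σ ^ 2 / 2) * (Δ : ℝ) with hc0
  set a : ℝ := rexp (-((Δ : ℝ) / τ)) with ha
  have hupos : 0 < (Δ : ℝ) / τ := by positivity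
  have hE1 : (1 : ℝ) < rexp ((Δ : ℝ) / τ) := by
    rw [← Real.exp_zero]; exact Real.exp_lt_exp.mpr hupos
  have ha0 : 0 < a := Real.exp_pos _
  have ha1 : a < 1 := by
    rw [ha, ← Real.exp_zero]; exact Real.exp_lt_exp.mpr (by linarith)
  have h1a : 1 - a ≠ 0 := sub_ne_zero.mpr (by linarith)
  have hEm1 : rexp ((Δ : ℝ) / τ) - 1 ≠ 0 := sub_ne_zero.mpr hE1.ne'
  have hEne : rexp ((Δ : ℝ) / τ) ≠ 0 := (Real.exp_pos _).ne'
  have haE : a = (rexp ((Δ : ℝ) / τ))⁻¹ := by rw [ha, Real.exp_neg]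
  -- ξ-based sigma algebras
  set mξ : ℕ → MeasurableSpace Ω := fun i => MeasurableSpace.comap (ξ i) inferInstance with hmξ
  have hleξ : ∀ i, mξ i ≤ ‹MeasurableSpace Ω› := fun i => (hmeasξ i).comap_le
  have hiiξ : iIndep mξ μ := hindepξ
  have hindepRξ : ∀ i, Indep (⨆ j ∈ Finset.range i, mξ j) (mξ i) μ := by
    intro i
    have hd : Disjoint {j : ℕ | j < i} ({i} : Set ℕ) := by
      simp [Set.disjoint_singleton_right]
    have h := indep_iSup_of_disjoint hleξ hiiξ hd
    refine indep_of_indep_of_le_right (indep_of_indep_of_le_left h ?_) ?_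
    · exact iSup₂_le fun j hj => le_biSup _ (Finset.mem_range.mp hj)
    · exact le_biSup _ (Set.mem_singleton i)
  -- ξ-based multiplier g
  set g : ℕ → Ω → ℝ := fun i ω => rexp (c0 + σ * ξ i ω) with hg
  have hgm : ∀ i, Measurable[mξ i] (g i) := fun i =>
    (((Measurable.of_comap_le le_rfl).const_mul σ).const_add c0).exp
  have hgint : ∀ i, Integrable (g i) μ := fun i =>
    exp_shift_integrable (hmeasξ i) (hgaussξ i) hΔne c0 σ
  have hge : ∀ i, ∫ ω, g i ω ∂μ = a := by
    intro i
    rw [hg]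
    rw [exp_shift_integral (hmeasξ i) (hgaussξ i) hΔne c0 σ, ha]
    congr 1
    rw [hc0]; field_simp; ring
  ------------------------------------------------------------------ L2
  have specL2 := rec_mean μ mξ hleξ hindepRξ g (fun _ _ => μ' * (Δ : ℝ)) a (μ' * (Δ : ℝ)) y0
    ((μ' * (Δ : ℝ)) / (1 - a)) (by field_simp) hgm (fun _ => measurable_const) hgint
    (fun _ => integrable_const _) hge (fun _ => by simp) YL2 hL20 (fun i ω => hL2rec i ω)
  have hTL2 : μ' * τ * (((Δ : ℝ) / τ) / (exp ((Δ : ℝ) / τ) - 1)) * exp ((Δ : ℝ) / τ)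
      = (μ' * (Δ : ℝ)) / (1 - a) := by
    rw [haE]; field_simp
  ------------------------------------------------------------------ S1
  have specS1 := rec_mean μ mξ hleξ hindepRξ g
    (fun i ω => μ' * (Δ : ℝ) / 2 * g i ω + μ' * (Δ : ℝ) / 2) a
    (μ' * (Δ : ℝ) / 2 * a + μ' * (Δ : ℝ) / 2) y0
    ((μ' * (Δ : ℝ) / 2 * a + μ' * (Δ : ℝ) / 2) / (1 - a)) (by field_simp) hgm
    (fun i => ((hgm i).const_mul _).add_const _)
    hgint (fun i => ((hgint i).const_mul _).add (integrable_const _))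
    hge
    (fun i => by
      rw [integral_add ((hgint i).const_mul _) (integrable_const _), integral_const_mul, hge i]
      simp)
    YS1 hS10 (fun i ω => by rw [hS1rec i ω]; ring)
  have hTS1 : 1 / 2 * (μ' * τ * (((Δ : ℝ) / τ) / (exp ((Δ : ℝ) / τ) - 1)))
        * (1 + exp ((Δ : ℝ) / τ))
      = (μ' * (Δ : ℝ) / 2 * a + μ' * (Δ : ℝ) / 2) / (1 - a) := by
    rw [haE]; field_simp
  ------------------------------------------------------------------ S2
  set c2 : ℝ := -(1 / τ + σ ^ 2 / 2) * ((Δ : ℝ) / 2) with hc2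
  set mB : ℕ → MeasurableSpace Ω := fun i =>
    MeasurableSpace.comap (φ i) inferInstance ⊔ MeasurableSpace.comap (ψ i) inferInstance with hmB
  set sB : ℕ × Bool → MeasurableSpace Ω := fun p =>
    MeasurableSpace.comap (if p.2 then φ p.1 else ψ p.1) inferInstance with hsB
  have hleB : ∀ p, sB p ≤ ‹MeasurableSpace Ω› := by
    rintro ⟨n, b⟩
    cases b
    · exact (hmeasψ n).comap_le
    · exact (hmeasφ n).comap_le
  have hiiB : iIndep sB μ := hindepφψ
  have hlemB : ∀ i, mB i ≤ ‹MeasurableSpace Ω› := fun i =>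
    sup_le (hmeasφ i).comap_le (hmeasψ i).comap_le
  have hindepRB : ∀ i, Indep (⨆ j ∈ Finset.range i, mB j) (mB i) μ := by
    intro i
    have hd : Disjoint {p : ℕ × Bool | p.1 < i} {p : ℕ × Bool | p.1 = i} := by
      rw [Set.disjoint_left]
      rintro ⟨n, b⟩ h1 h2
      exact absurd h2 (Nat.ne_of_lt h1)
    have h := indep_iSup_of_disjoint hleB hiiB hd
    refine indep_of_indep_of_le_right (indep_of_indep_of_le_left h ?_) ?_
    · refine iSup₂_le fun j hj => sup_le ?_ ?_
      · exact le_biSup sB (show ((j, true) : ℕ × Bool) ∈ {p : ℕ × Bool | p.1 < i}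
          from Finset.mem_range.mp hj)
      · exact le_biSup sB (show ((j, false) : ℕ × Bool) ∈ {p : ℕ × Bool | p.1 < i}
          from Finset.mem_range.mp hj)
    · refine sup_le ?_ ?_
      · exact le_biSup sB (show ((i, true) : ℕ × Bool) ∈ {p : ℕ × Bool | p.1 = i} from rfl)
      · exact le_biSup sB (show ((i, false) : ℕ × Bool) ∈ {p : ℕ × Bool | p.1 = i} from rfl)
  set g2 : ℕ → Ω → ℝ := fun i ω => rexp (c0 + σ * (φ i ω + ψ i ω)) with hg2
  have hφm : ∀ i, Measurable[mB i] (φ i) := fun i => Measurable.of_comap_le le_sup_left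
  have hψm : ∀ i, Measurable[mB i] (ψ i) := fun i => Measurable.of_comap_le le_sup_right
  have hg2m : ∀ i, Measurable[mB i] (g2 i) := fun i =>
    ((((hφm i).add (hψm i)).const_mul σ).const_add c0).exp
  have hφψ : ∀ i, IndepFun (φ i) (ψ i) μ := by
    intro i
    have := hindepφψ.indepFun (show ((i, true) : ℕ × Bool) ≠ (i, false) by simp)
    simpa using this
  have hexpm : Measurable fun x : ℝ => rexp (0 + σ * x) :=
    ((measurable_const_mul σ).const_add 0).exp
  have hIF2 : ∀ i, IndepFun (fun ω => rexp (0 + σ * φ i ω)) (fun ω => rexp (0 + σ * ψ i ω)) μ :=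
    fun i => (hφψ i).comp hexpm hexpm
  have int1 : ∀ i, Integrable (fun ω => rexp (0 + σ * φ i ω)) μ := fun i =>
    exp_shift_integrable (hmeasφ i) (hgaussφ i) hv2 0 σ
  have int2 : ∀ i, Integrable (fun ω => rexp (0 + σ * ψ i ω)) μ := fun i =>
    exp_shift_integrable (hmeasψ i) (hgaussψ i) hv2 0 σ
  have hg2eq : ∀ i, g2 i = fun ω => rexp c0 * (rexp (0 + σ * φ i ω) * rexp (0 + σ * ψ i ω)) := by
    intro i
    funext ω
    show rexp (c0 + σ * (φ i ω + ψ i ω)) = _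
    rw [← Real.exp_add, ← Real.exp_add]
    exact congrArg rexp (by ring)
  have hg2int : ∀ i, Integrable (g2 i) μ := by
    intro i
    rw [hg2eq i]
    exact (((hIF2 i).integrable_mul (int1 i) (int2 i)).const_mul (rexp c0) : _)
  have hg2e : ∀ i, ∫ ω, g2 i ω ∂μ = a := by
    intro i
    have hmul : (∫ ω, rexp (0 + σ * φ i ω) * rexp (0 + σ * ψ i ω) ∂μ)
        = (∫ ω, rexp (0 + σ * φ i ω) ∂μ) * ∫ ω, rexp (0 + σ * ψ i ω) ∂μ :=
      (hIF2 i).integral_fun_mul_eq_mul_integral (int1 i).aestronglyMeasurable (int2 i).aestronglyMeasurable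
    calc ∫ ω, g2 i ω ∂μ
        = ∫ ω, rexp c0 * (rexp (0 + σ * φ i ω) * rexp (0 + σ * ψ i ω)) ∂μ := by rw [hg2eq i]
      _ = rexp c0 * ((∫ ω, rexp (0 + σ * φ i ω) ∂μ) * ∫ ω, rexp (0 + σ * ψ i ω) ∂μ) := by
          rw [integral_const_mul, hmul]
      _ = rexp c0 * (rexp (0 + σ ^ 2 * ((Δ : ℝ) / 2) / 2) * rexp (0 + σ ^ 2 * ((Δ : ℝ) / 2) / 2)) := by
          rw [exp_shift_integral (hmeasφ i) (hgaussφ i) hv2 0 σ,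
            exp_shift_integral (hmeasψ i) (hgaussψ i) hv2 0 σ, hv2c]
      _ = a := by
          rw [← Real.exp_add, ← Real.exp_add, ha]
          congr 1
          rw [hc0]; field_simp; ring
  have hh2m : ∀ i, Measurable[mB i] (fun ω => μ' * (Δ : ℝ) * rexp (c2 + σ * ψ i ω)) := fun i =>
    ((((hψm i).const_mul σ).const_add c2).exp).const_mul _
  have hh2int : ∀ i, Integrable (fun ω => μ' * (Δ : ℝ) * rexp (c2 + σ * ψ i ω)) μ := fun i =>
    (exp_shift_integrable (hmeasψ i) (hgaussψ i) hv2 c2 σ).const_mul _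
  have hh2e : ∀ i, ∫ ω, μ' * (Δ : ℝ) * rexp (c2 + σ * ψ i ω) ∂μ
      = μ' * (Δ : ℝ) * rexp (-((Δ : ℝ) / (2 * τ))) := by
    intro i
    rw [integral_const_mul, exp_shift_integral (hmeasψ i) (hgaussψ i) hv2 c2 σ, hv2c]
    congr 2
    rw [hc2]; field_simp; ring
  have specS2 := rec_mean μ mB hlemB hindepRB g2
    (fun i ω => μ' * (Δ : ℝ) * rexp (c2 + σ * ψ i ω)) a
    (μ' * (Δ : ℝ) * rexp (-((Δ : ℝ) / (2 * τ)))) y0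
    ((μ' * (Δ : ℝ) * rexp (-((Δ : ℝ) / (2 * τ)))) / (1 - a)) (by field_simp) hg2m hh2m
    hg2int hh2int hg2e hh2e YS2 hS20 (fun i ω => hS2rec i ω)
  have hs2 : rexp ((Δ : ℝ) / τ) = rexp ((Δ : ℝ) / (2 * τ)) * rexp ((Δ : ℝ) / (2 * τ)) := by
    rw [← Real.exp_add]
    congr 1
    field_simp
    ring
  have hsne : rexp ((Δ : ℝ) / (2 * τ)) ≠ 0 := (Real.exp_pos _).ne'
  have hss1 : rexp ((Δ : ℝ) / (2 * τ)) * rexp ((Δ : ℝ) / (2 * τ)) - 1 ≠ 0 := by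
    rw [← hs2]; exact hEm1
  have hTS2 : μ' * τ * (((Δ : ℝ) / τ) / (exp ((Δ : ℝ) / τ) - 1)) * exp ((Δ : ℝ) / (2 * τ))
      = (μ' * (Δ : ℝ) * rexp (-((Δ : ℝ) / (2 * τ)))) / (1 - a) := by
    rw [haE, Real.exp_neg, hs2]
    field_simp
  refine ⟨?_, ?_, ?_⟩
  · rw [hTL2]
    exact (tendsto_aux ha0.le ha1).congr fun i => ((specL2 i).2.2).symm
  · rw [hTS1]
    exact (tendsto_aux ha0.le ha1).congr fun i => ((specS1 i).2.2).symm
  · rw [hTS2]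
    exact (tendsto_aux ha0.le ha1).congr fun i => ((specS2 i).2.2).symm
end

section
/- If $\sigma^2\tau<2$, the asymptotic variance of the second Strang scheme equals $\big(\mu\tau\frac{\Delta/\tau}{e^{\Delta/\tau}-1}\big)^2\cdot\frac{e^{\Delta/\tau}(1-e^{\Delta\sigma^2/2})(e^{2\Delta/\tau}+e^{\Delta\sigma^2/2})}{e^{\Delta\sigma^2}-e^{2\Delta/\tau}}$. -/
set_option maxHeartbeats 1000000

open MeasureTheory ProbabilityTheory Filter Real
open scoped NNReal ENNReal


lemma tendsto_affine_rec' {q : ℝ} (hq0 : 0 ≤ q) (hq : q < 1) {u : ℕ → ℝ} {L : ℝ}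
    (hu : Tendsto u atTop (nhds L)) {x : ℕ → ℝ}
    (hx : ∀ n, x (n + 1) = q * x n + u n) :
    Tendsto x atTop (nhds (L / (1 - q))) := by
  have h1q : 0 < 1 - q := by linarith
  set M : ℝ := L / (1 - q) with hM
  have hqM : q * M + L = M := by rw [hM, eq_div_iff h1q.ne', add_mul, mul_assoc, div_mul_cancel₀ _ h1q.ne']; ring
  have key : Tendsto (fun n => x n - M) atTop (nhds 0) := by
    rw [Metric.tendsto_atTop]
    intro ε hε
    have hδ : 0 < ε * (1 - q) / 2 := by positivity
    obtain ⟨N, hN⟩ := (Metric.tendsto_atTop.mp hu) (ε * (1 - q) / 2) hδ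
    -- bound: for all k, |x (N+k) - M| ≤ q^k * |x N - M| + ε/2
    have bound : ∀ k, |x (N + k) - M| ≤ q ^ k * |x N - M| + ε / 2 := by
      intro k
      induction k with
      | zero => simp; positivity
      | succ k ih =>
        have hrec : x (N + k + 1) - M = q * (x (N + k) - M) + (u (N + k) - L) := by
          rw [hx (N + k)]; linear_combination hqM
        have hu' : |u (N + k) - L| ≤ ε * (1 - q) / 2 := by
          have := hN (N + k) (Nat.le_add_right _ _)
          rw [Real.dist_eq] at this
          linarith
        calc |x (N + (k + 1)) - M| = |q * (x (N + k) - M) + (u (N + k) - L)| := by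
              rw [show N + (k+1) = N + k + 1 by ring, hrec]
          _ ≤ |q * (x (N + k) - M)| + |u (N + k) - L| := abs_add_le _ _
          _ = q * |x (N + k) - M| + |u (N + k) - L| := by
              rw [abs_mul, abs_of_nonneg hq0]
          _ ≤ q * (q ^ k * |x N - M| + ε / 2) + ε * (1 - q) / 2 := by
              have := mul_le_mul_of_nonneg_left ih hq0
              linarith
          _ ≤ q ^ (k + 1) * |x N - M| + ε / 2 := by
              have h1 : q * (ε / 2) + ε * (1 - q) / 2 = ε / 2 := by ring
              have : q * (q ^ k * |x N - M|) = q ^ (k+1) * |x N - M| := by ring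
              nlinarith [abs_nonneg (x N - M)]
    -- choose K with q^K * |x N - M| < ε/2
    have hpow : Tendsto (fun k : ℕ => q ^ k * |x N - M|) atTop (nhds 0) := by
      simpa using (tendsto_pow_atTop_nhds_zero_of_lt_one hq0 hq).mul_const |x N - M|
    obtain ⟨K, hK⟩ := (Metric.tendsto_atTop.mp hpow) (ε / 2) (by positivity)
    refine ⟨N + K, fun n hn => ?_⟩
    have hnN : N ≤ n := le_trans (Nat.le_add_right _ _) hn
    have hform : n = N + (n - N) := by omega
    have hKle : K ≤ n - N := by omega
    have h1 := bound (n - N)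
    have h2 := hK (n - N) hKle
    rw [Real.dist_eq, sub_zero] at h2 ⊢
    have h3 : q ^ (n - N) * |x N - M| < ε / 2 := lt_of_abs_lt h2
    rw [← hform] at h1
    calc |x n - M| ≤ q ^ (n-N) * |x N - M| + ε / 2 := h1
      _ < ε / 2 + ε / 2 := by linarith
      _ = ε := by ring
  have := key.add_const M
  simpa using this


lemma gauss_pdf_mul (v : ℝ≥0) (hv : (0:ℝ) < v) (t x : ℝ) :
    exp (t * x) * gaussianPDFReal 0 v x
      = exp ((v:ℝ) * t ^ 2 / 2) * gaussianPDFReal ((v:ℝ) * t) v x := by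
  unfold gaussianPDFReal
  rw [mul_left_comm, ← Real.exp_add, mul_left_comm, ← Real.exp_add]
  congr 2
  field_simp
  ring

lemma integral_exp_gaussianReal (v : ℝ≥0) (hv : v ≠ 0) (t : ℝ) :
    (∫ x, exp (t * x) ∂(gaussianReal 0 v)) = exp ((v:ℝ) * t ^ 2 / 2)
      ∧ Integrable (fun x => exp (t * x)) (gaussianReal 0 v) := by
  have hv' : (0:ℝ) < v := by positivity
  have hmeas : Measurable fun x => Real.toNNReal (gaussianPDFReal 0 v x) :=
    (measurable_gaussianPDFReal 0 v).real_toNNReal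
  have hrw : gaussianReal 0 v
      = volume.withDensity (fun x => ((Real.toNNReal (gaussianPDFReal 0 v x) : ℝ≥0) : ℝ≥0∞)) := by
    rw [gaussianReal_of_var_ne_zero _ hv]; rfl
  have hsmul : ∀ x, (Real.toNNReal (gaussianPDFReal 0 v x)) • exp (t * x)
      = exp ((v:ℝ) * t ^ 2 / 2) * gaussianPDFReal ((v:ℝ) * t) v x := by
    intro x
    rw [NNReal.smul_def, smul_eq_mul, Real.coe_toNNReal _ (gaussianPDFReal_nonneg 0 v x),
      mul_comm, gauss_pdf_mul v hv']
  constructor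
  · rw [hrw, integral_withDensity_eq_integral_smul hmeas]
    simp_rw [hsmul]
    rw [integral_const_mul, integral_gaussianPDFReal_eq_one _ hv, mul_one]
  · rw [hrw, integrable_withDensity_iff_integrable_smul hmeas]
    apply Integrable.congr ((integrable_gaussianPDFReal ((v:ℝ)*t) v).const_mul (exp ((v:ℝ) * t^2/2)))
    filter_upwards with x
    rw [← hsmul x]

lemma exp_moment {Ω : Type*} [MeasurableSpace Ω] (μ : Measure Ω) (v : ℝ≥0) (hv : v ≠ 0)
    (X : Ω → ℝ) (hX : Measurable X) (hmap : Measure.map X μ = gaussianReal 0 v) (t : ℝ) :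
    Integrable (fun ω => exp (t * X ω)) μ
      ∧ ∫ ω, exp (t * X ω) ∂μ = exp ((v:ℝ) * t ^ 2 / 2) := by
  obtain ⟨hval, hint⟩ := integral_exp_gaussianReal v hv t
  have hmeasg : Measurable fun x : ℝ => exp (t * x) :=
    Real.measurable_exp.comp (measurable_const_mul t)
  rw [← hmap] at hval hint
  constructor
  · exact (integrable_map_measure hmeasg.aestronglyMeasurable hX.aemeasurable).mp hint
  · rw [← hval, integral_map hX.aemeasurable hmeasg.aestronglyMeasurable]

lemma exp_moment2' {Ω : Type*} [MeasurableSpace Ω] (μ : Measure Ω) (v : ℝ≥0) (hv : v ≠ 0)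
    (X Y : Ω → ℝ) (hX : Measurable X) (hY : Measurable Y)
    (hmapX : Measure.map X μ = gaussianReal 0 v) (hmapY : Measure.map Y μ = gaussianReal 0 v)
    (hXY : IndepFun X Y μ) (c s t : ℝ) :
    Integrable (fun ω => exp (c + s * X ω + t * Y ω)) μ
      ∧ ∫ ω, exp (c + s * X ω + t * Y ω) ∂μ
          = exp c * exp ((v:ℝ) * s ^ 2 / 2) * exp ((v:ℝ) * t ^ 2 / 2) := by
  obtain ⟨hXi, hXv⟩ := exp_moment μ v hv X hX hmapX s
  obtain ⟨hYi, hYv⟩ := exp_moment μ v hv Y hY hmapY t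
  have hindep : IndepFun (fun ω => exp (s * X ω)) (fun ω => exp (t * Y ω)) μ :=
    hXY.comp (Real.measurable_exp.comp (measurable_const_mul s))
      (Real.measurable_exp.comp (measurable_const_mul t))
  have hkey : ∀ ω, exp (c + s * X ω + t * Y ω)
      = exp c * (exp (s * X ω) * exp (t * Y ω)) := by
    intro ω; rw [← Real.exp_add, ← Real.exp_add, add_assoc]
  have hmul : Integrable (fun ω => exp (s * X ω) * exp (t * Y ω)) μ :=
    hindep.integrable_mul hXi hYi
  constructor
  · exact ((hmul.const_mul (exp c)).congr (by filter_upwards with ω using (hkey ω).symm))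
  · simp_rw [hkey]
    rw [integral_const_mul]
    have h2 := hindep.integral_mul_eq_mul_integral hXi.aestronglyMeasurable hYi.aestronglyMeasurable
    rw [show (fun a => rexp (s * X a) * rexp (t * Y a))
        = ((fun ω => rexp (s * X ω)) * fun ω => rexp (t * Y ω)) from rfl, h2, hXv, hYv, mul_assoc]




/-- joint mean / second-moment recursion -/
noncomputable def strangMS (a bB qq cc dd y0 : ℝ) : ℕ → ℝ × ℝ
  | 0 => (y0, y0 ^ 2)
  | n + 1 => (a * (strangMS a bB qq cc dd y0 n).1 + bB,
      qq * (strangMS a bB qq cc dd y0 n).2 + (cc * (strangMS a bB qq cc dd y0 n).1 + dd))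

/-- If `σ²τ < 2`, the asymptotic variance of the second Strang scheme
equals `(μ'τ (Δ/τ)/(e^{Δ/τ}-1))² ⬝ e^{Δ/τ}(1 - e^{Δσ²/2})(e^{2Δ/τ} + e^{Δσ²/2}) /
(e^{Δσ²} - e^{2Δ/τ})`. -/
theorem strang_S2_asymptotic_variance
    {Ω : Type*} [MeasurableSpace Ω] (μ : Measure Ω) [IsProbabilityMeasure μ]
    (φ ψ : ℕ → Ω → ℝ) (τ σ μ' y0 : ℝ) (Δ : NNReal)
    (hτ : 0 < τ) (hσ : 0 < σ) (hΔ : 0 < (Δ : ℝ))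
    (hmeasφ : ∀ i, Measurable (φ i)) (hmeasψ : ∀ i, Measurable (ψ i))
    (hindep : iIndepFun
      (fun p : ℕ × Bool => if p.2 then φ p.1 else ψ p.1) μ)
    (hgaussφ : ∀ i, Measure.map (φ i) μ = gaussianReal 0 (Δ / 2))
    (hgaussψ : ∀ i, Measure.map (ψ i) μ = gaussianReal 0 (Δ / 2))
    (Y : ℕ → Ω → ℝ)
    (hY0 : ∀ ω, Y 0 ω = y0)
    (hYrec : ∀ i ω, Y (i + 1) ω
      = Y i ω * exp (-(1 / τ + σ ^ 2 / 2) * (Δ : ℝ) + σ * (φ i ω + ψ i ω))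
        + μ' * (Δ : ℝ) * exp (-(1 / τ + σ ^ 2 / 2) * ((Δ : ℝ) / 2) + σ * ψ i ω))
    (hstat : σ ^ 2 * τ < 2) :
    Tendsto (fun i : ℕ => variance (Y i) μ) atTop
      (nhds ((μ' * τ * (((Δ : ℝ) / τ) / (exp ((Δ : ℝ) / τ) - 1))) ^ 2
        * (exp ((Δ : ℝ) / τ) * (1 - exp ((Δ : ℝ) * σ ^ 2 / 2))
            * (exp (2 * (Δ : ℝ) / τ) + exp ((Δ : ℝ) * σ ^ 2 / 2)) /
          (exp ((Δ : ℝ) * σ ^ 2) - exp (2 * (Δ : ℝ) / τ))))) := by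
  have hτ' : τ ≠ 0 := ne_of_gt hτ
  -- Gaussian variance parameter
  set v : ℝ≥0 := Δ / 2 with hvdef
  have hvR : (v : ℝ) = (Δ : ℝ) / 2 := by rw [hvdef]; push_cast; ring
  have hv : v ≠ 0 := by
    intro h
    rw [h] at hvR
    simp at hvR
    linarith
  -- the indexed family
  set F : ℕ × Bool → Ω → ℝ := fun p => if p.2 then φ p.1 else ψ p.1 with hFdef
  have hmf : ∀ p, Measurable (F p) := by
    rintro ⟨i, b⟩
    cases b
    · exact hmeasψ i
    · exact hmeasφ i
  have hiI : iIndep (fun p => MeasurableSpace.comap (F p) inferInstance) μ :=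
    (iIndepFun_iff_iIndep _ _ _).mp hindep
  -- past and future σ-algebras
  set G : ℕ → MeasurableSpace Ω :=
    fun i => ⨆ p ∈ {p : ℕ × Bool | p.1 < i}, MeasurableSpace.comap (F p) inferInstance with hGdef
  set H : ℕ → MeasurableSpace Ω :=
    fun i => ⨆ p ∈ {p : ℕ × Bool | p.1 < i}ᶜ, MeasurableSpace.comap (F p) inferInstance with hHdef
  have hGH : ∀ i, Indep (G i) (H i) μ :=
    fun i => indep_biSup_compl (fun p => (hmf p).comap_le) hiI _
  have hGle : ∀ i, G i ≤ (inferInstance : MeasurableSpace Ω) :=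
    fun i => iSup₂_le fun p _ => (hmf p).comap_le
  have hcomap : ∀ p, Measurable[MeasurableSpace.comap (F p) inferInstance] (F p) :=
    fun p => Measurable.of_comap_le le_rfl
  have hφG : ∀ i j, j < i → Measurable[G i] (φ j) := by
    intro i j hj
    have hle : MeasurableSpace.comap (F (j, true)) inferInstance ≤ G i :=
      le_biSup (fun p : ℕ × Bool => MeasurableSpace.comap (F p) inferInstance)
        (show ((j, true) : ℕ × Bool) ∈ {p : ℕ × Bool | p.1 < i} from hj)
    exact (hcomap (j, true)).le hle
  have hψG : ∀ i j, j < i → Measurable[G i] (ψ j) := by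
    intro i j hj
    have hle : MeasurableSpace.comap (F (j, false)) inferInstance ≤ G i :=
      le_biSup (fun p : ℕ × Bool => MeasurableSpace.comap (F p) inferInstance)
        (show ((j, false) : ℕ × Bool) ∈ {p : ℕ × Bool | p.1 < i} from hj)
    exact (hcomap (j, false)).le hle
  have hφH : ∀ i, Measurable[H i] (φ i) := by
    intro i
    have hle : MeasurableSpace.comap (F (i, true)) inferInstance ≤ H i :=
      le_biSup (fun p : ℕ × Bool => MeasurableSpace.comap (F p) inferInstance)
        (show ((i, true) : ℕ × Bool) ∈ {p : ℕ × Bool | p.1 < i}ᶜ from by simp)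
    exact (hcomap (i, true)).le hle
  have hψH : ∀ i, Measurable[H i] (ψ i) := by
    intro i
    have hle : MeasurableSpace.comap (F (i, false)) inferInstance ≤ H i :=
      le_biSup (fun p : ℕ × Bool => MeasurableSpace.comap (F p) inferInstance)
        (show ((i, false) : ℕ × Bool) ∈ {p : ℕ × Bool | p.1 < i}ᶜ from by simp)
    exact (hcomap (i, false)).le hle
  -- Y i is measurable w.r.t. the past
  have hYG : ∀ i, Measurable[G i] (Y i) := by
    intro i
    induction i with
    | zero =>
      have : Y 0 = fun _ => y0 := funext hY0
      rw [this]; exact measurable_const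
    | succ i ih =>
      have hGmono : G i ≤ G (i + 1) := biSup_mono fun p hp => Nat.lt_succ_of_lt hp
      have hYi : Measurable[G (i + 1)] (Y i) := ih.le hGmono
      have hφi : Measurable[G (i + 1)] (φ i) := hφG (i + 1) i (Nat.lt_succ_self i)
      have hψi : Measurable[G (i + 1)] (ψ i) := hψG (i + 1) i (Nat.lt_succ_self i)
      have : Y (i + 1) = fun ω => Y i ω * exp (-(1 / τ + σ ^ 2 / 2) * (Δ : ℝ)
          + σ * (φ i ω + ψ i ω))
          + μ' * (Δ : ℝ) * exp (-(1 / τ + σ ^ 2 / 2) * ((Δ : ℝ) / 2) + σ * ψ i ω) :=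
        funext (hYrec i)
      rw [this]
      exact (hYi.mul (Real.measurable_exp.comp (measurable_const.add
          ((hφi.add hψi).const_mul σ)))).add
        ((Real.measurable_exp.comp (measurable_const.add (hψi.const_mul σ))).const_mul _)
  have hYmeas : ∀ i, Measurable (Y i) := fun i => (hYG i).le (hGle i)
  -- independence of Y i (past) from functions of (φ i, ψ i) (future)
  have hIndepF : ∀ i (V W : Ω → ℝ), Measurable[G i] V → Measurable[H i] W →
      IndepFun V W μ := by
    intro i V W hV hW
    exact indep_of_indep_of_le_right
      (indep_of_indep_of_le_left (hGH i) (measurable_iff_comap_le.mp hV))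
      (measurable_iff_comap_le.mp hW)
  have hφψ : ∀ i, IndepFun (φ i) (ψ i) μ := by
    intro i
    exact hindep.indepFun (show ((i, true) : ℕ × Bool) ≠ (i, false) by simp)
  -- moments of exponentials
  have hmom : ∀ (i : ℕ) (c s t : ℝ),
      Integrable (fun ω => exp (c + s * φ i ω + t * ψ i ω)) μ
        ∧ ∫ ω, exp (c + s * φ i ω + t * ψ i ω) ∂μ
            = exp c * exp ((v : ℝ) * s ^ 2 / 2) * exp ((v : ℝ) * t ^ 2 / 2) :=
    fun i c s t => exp_moment2' μ v hv (φ i) (ψ i) (hmeasφ i) (hmeasψ i)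
      (hgaussφ i) (hgaussψ i) (hφψ i) c s t
  -- constants
  set cA : ℝ := -(1 / τ + σ ^ 2 / 2) * (Δ : ℝ) with hcA
  set cB : ℝ := -(1 / τ + σ ^ 2 / 2) * ((Δ : ℝ) / 2) with hcB
  set b0 : ℝ := μ' * (Δ : ℝ) with hb0
  set a : ℝ := exp cA * exp ((v : ℝ) * σ ^ 2 / 2) * exp ((v : ℝ) * σ ^ 2 / 2) with ha
  set bB : ℝ := b0 * (exp cB * exp ((v : ℝ) * 0 ^ 2 / 2) * exp ((v : ℝ) * σ ^ 2 / 2)) with hbB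
  set qq : ℝ := exp (2 * cA) * exp ((v : ℝ) * (2 * σ) ^ 2 / 2)
    * exp ((v : ℝ) * (2 * σ) ^ 2 / 2) with hqq
  set cc : ℝ := 2 * b0 * (exp (cA + cB) * exp ((v : ℝ) * σ ^ 2 / 2)
    * exp ((v : ℝ) * (2 * σ) ^ 2 / 2)) with hcc
  set dd : ℝ := b0 ^ 2 * (exp (2 * cB) * exp ((v : ℝ) * 0 ^ 2 / 2)
    * exp ((v : ℝ) * (2 * σ) ^ 2 / 2)) with hdd
  set MS : ℕ → ℝ × ℝ := strangMS a bB qq cc dd y0 with hMS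
  have hMS0 : MS 0 = (y0, y0 ^ 2) := by rw [hMS]; simp [strangMS]
  have hMS1 : ∀ n, (MS (n + 1)).1 = a * (MS n).1 + bB := by intro n; rw [hMS]; simp [strangMS]
  have hMS2 : ∀ n, (MS (n + 1)).2 = qq * (MS n).2 + (cc * (MS n).1 + dd) := by
    intro n; rw [hMS]; simp [strangMS]
  -- normalized recursion
  have hYrec' : ∀ i ω, Y (i + 1) ω = Y i ω * exp (cA + σ * φ i ω + σ * ψ i ω)
      + b0 * exp (cB + 0 * φ i ω + σ * ψ i ω) := by
    intro i ω
    rw [hYrec i ω,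
      show cA + σ * (φ i ω + ψ i ω) = cA + σ * φ i ω + σ * ψ i ω from by ring,
      show cB + σ * ψ i ω = cB + 0 * φ i ω + σ * ψ i ω from by ring]
  -- generic independent product integral
  have integral_mul' : ∀ (X W : Ω → ℝ), IndepFun X W μ → Integrable X μ → Integrable W μ →
      ∫ ω, X ω * W ω ∂μ = (∫ ω, X ω ∂μ) * ∫ ω, W ω ∂μ := by
    intro X W h hX hW
    exact h.integral_mul_eq_mul_integral hX.aestronglyMeasurable hW.aestronglyMeasurable
  -- main induction: integrability and moments
  have hInd : ∀ i, Integrable (Y i) μ ∧ Integrable (fun ω => (Y i ω) ^ 2) μ ∧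
      (∫ ω, Y i ω ∂μ) = (MS i).1 ∧ (∫ ω, (Y i ω) ^ 2 ∂μ) = (MS i).2 := by
    intro i
    induction i with
    | zero =>
      have h0 : Y 0 = fun _ => y0 := funext hY0
      refine ⟨by rw [h0]; exact integrable_const _, ?_, ?_, ?_⟩
      · have : (fun ω => (Y 0 ω) ^ 2) = fun _ => y0 ^ 2 := by
          funext ω; rw [hY0]
        rw [this]; exact integrable_const _
      · rw [h0, hMS0]; simp
      · have : (fun ω => (Y 0 ω) ^ 2) = fun _ => y0 ^ 2 := by
          funext ω; rw [hY0]
        rw [this, hMS0]; simp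
    | succ i ih =>
      obtain ⟨hYint, hY2int, hYval, hY2val⟩ := ih
      obtain ⟨hAint, hAval⟩ := hmom i cA σ σ
      obtain ⟨hBint, hBval⟩ := hmom i cB 0 σ
      obtain ⟨hA2int, hA2val⟩ := hmom i (2 * cA) (2 * σ) (2 * σ)
      obtain ⟨hABint, hABval⟩ := hmom i (cA + cB) σ (2 * σ)
      obtain ⟨hB2int, hB2val⟩ := hmom i (2 * cB) 0 (2 * σ)
      have hexpH : ∀ c s t : ℝ,
          Measurable[H i] (fun ω => exp (c + s * φ i ω + t * ψ i ω)) :=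
        fun c s t => Real.measurable_exp.comp
          ((measurable_const.add ((hφH i).const_mul s)).add ((hψH i).const_mul t))
      have hindA : IndepFun (Y i) (fun ω => exp (cA + σ * φ i ω + σ * ψ i ω)) μ :=
        hIndepF i _ _ (hYG i) (hexpH cA σ σ)
      have hindA2 : IndepFun (fun ω => (Y i ω) ^ 2)
          (fun ω => exp (2 * cA + (2 * σ) * φ i ω + (2 * σ) * ψ i ω)) μ :=
        hIndepF i _ _ ((hYG i).pow_const 2) (hexpH _ _ _)
      have hindAB : IndepFun (Y i)
          (fun ω => exp ((cA + cB) + σ * φ i ω + (2 * σ) * ψ i ω)) μ :=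
        hIndepF i _ _ (hYG i) (hexpH _ _ _)
      have hYA : Integrable (fun ω => Y i ω * exp (cA + σ * φ i ω + σ * ψ i ω)) μ :=
        hindA.integrable_mul hYint hAint
      have hY2A2 : Integrable (fun ω =>
          (Y i ω) ^ 2 * exp (2 * cA + (2 * σ) * φ i ω + (2 * σ) * ψ i ω)) μ :=
        hindA2.integrable_mul hY2int hA2int
      have hYAB : Integrable (fun ω =>
          Y i ω * exp ((cA + cB) + σ * φ i ω + (2 * σ) * ψ i ω)) μ :=
        hindAB.integrable_mul hYint hABint
      have hrec1 : Y (i + 1) = fun ω => Y i ω * exp (cA + σ * φ i ω + σ * ψ i ω)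
          + b0 * exp (cB + 0 * φ i ω + σ * ψ i ω) := funext fun ω => hYrec' i ω
      have hsq : ∀ ω, (Y (i + 1) ω) ^ 2
          = (Y i ω) ^ 2 * exp (2 * cA + (2 * σ) * φ i ω + (2 * σ) * ψ i ω)
            + (2 * b0) * (Y i ω * exp ((cA + cB) + σ * φ i ω + (2 * σ) * ψ i ω))
            + b0 ^ 2 * exp (2 * cB + 0 * φ i ω + (2 * σ) * ψ i ω) := by
        intro ω
        rw [hYrec' i ω,
          show exp (2 * cA + (2 * σ) * φ i ω + (2 * σ) * ψ i ω)
            = exp (cA + σ * φ i ω + σ * ψ i ω) * exp (cA + σ * φ i ω + σ * ψ i ω) from by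
            rw [← Real.exp_add]; congr 1; ring,
          show exp ((cA + cB) + σ * φ i ω + (2 * σ) * ψ i ω)
            = exp (cA + σ * φ i ω + σ * ψ i ω) * exp (cB + 0 * φ i ω + σ * ψ i ω) from by
            rw [← Real.exp_add]; congr 1; ring,
          show exp (2 * cB + 0 * φ i ω + (2 * σ) * ψ i ω)
            = exp (cB + 0 * φ i ω + σ * ψ i ω) * exp (cB + 0 * φ i ω + σ * ψ i ω) from by
            rw [← Real.exp_add]; congr 1; ring]
        ring
      have hsqf : (fun ω => (Y (i + 1) ω) ^ 2) = fun ω =>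
          (Y i ω) ^ 2 * exp (2 * cA + (2 * σ) * φ i ω + (2 * σ) * ψ i ω)
          + (2 * b0) * (Y i ω * exp ((cA + cB) + σ * φ i ω + (2 * σ) * ψ i ω))
          + b0 ^ 2 * exp (2 * cB + 0 * φ i ω + (2 * σ) * ψ i ω) := funext hsq
      refine ⟨?_, ?_, ?_, ?_⟩
      · rw [hrec1]
        exact hYA.add (hBint.const_mul b0)
      · rw [hsqf]
        exact (hY2A2.add (hYAB.const_mul (2 * b0))).add (hB2int.const_mul (b0 ^ 2))
      · rw [hMS1 i]
        simp only [hrec1]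
        rw [integral_add hYA (hBint.const_mul b0), integral_const_mul,
          integral_mul' _ _ hindA hYint hAint, hAval, hBval, hYval]
        rw [ha, hbB]
        ring
      · rw [hMS2 i]
        simp only [hsqf]
        have hsum12 : Integrable (fun ω =>
            (Y i ω) ^ 2 * exp (2 * cA + (2 * σ) * φ i ω + (2 * σ) * ψ i ω)
            + (2 * b0) * (Y i ω * exp ((cA + cB) + σ * φ i ω + (2 * σ) * ψ i ω))) μ :=
          hY2A2.add (hYAB.const_mul (2 * b0))
        rw [integral_add hsum12 (hB2int.const_mul (b0 ^ 2)),
          integral_add hY2A2 (hYAB.const_mul (2 * b0)), integral_const_mul, integral_const_mul,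
          integral_mul' _ _ hindA2 hY2int hA2int,
          integral_mul' _ _ hindAB hYint hABint,
          hA2val, hABval, hB2val, hYval, hY2val]
        rw [hqq, hcc, hdd]
        ring
  -- variance formula
  have hvar : ∀ i, variance (Y i) μ = (MS i).2 - (MS i).1 ^ 2 := by
    intro i
    obtain ⟨h1, h2, h3, h4⟩ := hInd i
    have hmem : MemLp (Y i) 2 μ :=
      (memLp_two_iff_integrable_sq (hYmeas i).aestronglyMeasurable).mpr h2
    rw [variance_eq_sub hmem, ← h3, ← h4]
    rfl
  -- clean exponential forms
  have haE : a = exp (-((Δ : ℝ) / τ)) := by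
    rw [ha, ← Real.exp_add, ← Real.exp_add]
    congr 1
    rw [hcA, hvR]; field_simp; ring
  have hbBE : bB = b0 * exp (-((Δ : ℝ) / (2 * τ))) := by
    rw [hbB, ← Real.exp_add, ← Real.exp_add]
    congr 2
    rw [hcB, hvR]; field_simp; ring
  have hqqE : qq = exp (σ ^ 2 * (Δ : ℝ) - 2 * (Δ : ℝ) / τ) := by
    rw [hqq, ← Real.exp_add, ← Real.exp_add]
    congr 1
    rw [hcA, hvR]; field_simp; ring
  have hccE : cc = 2 * b0 * exp (σ ^ 2 * (Δ : ℝ) / 2 - 3 * (Δ : ℝ) / (2 * τ)) := by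
    rw [hcc, ← Real.exp_add, ← Real.exp_add]
    congr 2
    rw [hcA, hcB, hvR]; field_simp; ring
  have hddE : dd = b0 ^ 2 * exp (σ ^ 2 * (Δ : ℝ) / 2 - (Δ : ℝ) / τ) := by
    rw [hdd, ← Real.exp_add, ← Real.exp_add]
    congr 2
    rw [hcB, hvR]; field_simp; ring
  -- bounds
  have ha0 : 0 ≤ a := by rw [haE]; exact (Real.exp_pos _).le
  have ha1 : a < 1 := by
    rw [haE]; exact Real.exp_lt_one_iff.mpr (by rw [neg_lt_zero]; positivity)
  have hσ2 : σ ^ 2 < 2 / τ := by rw [lt_div_iff₀ hτ]; linarith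
  have hqq0 : 0 ≤ qq := by rw [hqqE]; exact (Real.exp_pos _).le
  have hqq1 : qq < 1 := by
    rw [hqqE]
    apply Real.exp_lt_one_iff.mpr
    have h1 : σ ^ 2 * (Δ : ℝ) < 2 / τ * (Δ : ℝ) := mul_lt_mul_of_pos_right hσ2 hΔ
    have h2 : 2 / τ * (Δ : ℝ) = 2 * (Δ : ℝ) / τ := by ring
    linarith
  -- limits
  have hm : Tendsto (fun n => (MS n).1) atTop (nhds (bB / (1 - a))) :=
    tendsto_affine_rec' ha0 ha1 tendsto_const_nhds hMS1
  have hs : Tendsto (fun n => (MS n).2) atTop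
      (nhds ((cc * (bB / (1 - a)) + dd) / (1 - qq))) := by
    have hu : Tendsto (fun n => cc * (MS n).1 + dd) atTop
        (nhds (cc * (bB / (1 - a)) + dd)) := (hm.const_mul cc).add_const dd
    exact tendsto_affine_rec' hqq0 hqq1 hu hMS2
  have hfinal : Tendsto (fun i => variance (Y i) μ) atTop
      (nhds ((cc * (bB / (1 - a)) + dd) / (1 - qq) - (bB / (1 - a)) ^ 2)) :=
    (hs.sub (hm.pow 2)).congr fun i => (hvar i).symm
  have hval : (cc * (bB / (1 - a)) + dd) / (1 - qq) - (bB / (1 - a)) ^ 2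
      = (μ' * τ * (((Δ : ℝ) / τ) / (exp ((Δ : ℝ) / τ) - 1))) ^ 2
        * (exp ((Δ : ℝ) / τ) * (1 - exp ((Δ : ℝ) * σ ^ 2 / 2))
            * (exp (2 * (Δ : ℝ) / τ) + exp ((Δ : ℝ) * σ ^ 2 / 2)) /
          (exp ((Δ : ℝ) * σ ^ 2) - exp (2 * (Δ : ℝ) / τ))) := by
    set E1 : ℝ := exp ((Δ : ℝ) / (2 * τ)) with hE1
    set E2 : ℝ := exp ((Δ : ℝ) * σ ^ 2 / 4) with hE2
    have hE1pos : 0 < E1 := Real.exp_pos _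
    have hE2pos : 0 < E2 := Real.exp_pos _
    have hE1gt1 : 1 < E1 := by rw [hE1]; exact Real.one_lt_exp_iff.mpr (by positivity)
    have hE2lt : E2 < E1 := by
      rw [hE1, hE2]
      apply Real.exp_lt_exp.mpr
      rw [div_lt_div_iff₀ (by norm_num) (by positivity)]
      have := mul_lt_mul_of_pos_left hσ2 hΔ
      calc (Δ : ℝ) * σ ^ 2 * (2 * τ) < (Δ : ℝ) * (2 / τ) * (2 * τ) := by
            apply mul_lt_mul_of_pos_right this (by positivity)
        _ = (Δ : ℝ) * 4 := by field_simp; ring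
      -- done
    -- power identities
    have hu2 : exp ((Δ : ℝ) / τ) = E1 ^ 2 := by
      rw [show (Δ : ℝ) / τ = (Δ : ℝ) / (2 * τ) + (Δ : ℝ) / (2 * τ) by field_simp; ring,
        Real.exp_add, ← hE1, ← pow_two]
    have hu4 : exp (2 * (Δ : ℝ) / τ) = E1 ^ 4 := by
      rw [show 2 * (Δ : ℝ) / τ = ((Δ : ℝ) / (2 * τ) + (Δ : ℝ) / (2 * τ))
          + ((Δ : ℝ) / (2 * τ) + (Δ : ℝ) / (2 * τ)) by field_simp; ring,
        Real.exp_add, Real.exp_add, ← hE1]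
      ring
    have hu3 : exp (3 * (Δ : ℝ) / (2 * τ)) = E1 ^ 3 := by
      rw [show 3 * (Δ : ℝ) / (2 * τ) = (Δ : ℝ) / (2 * τ) + (Δ : ℝ) / (2 * τ)
          + (Δ : ℝ) / (2 * τ) by field_simp; ring,
        Real.exp_add, Real.exp_add, ← hE1]
      ring
    have hw2 : exp ((Δ : ℝ) * σ ^ 2 / 2) = E2 ^ 2 := by
      rw [show (Δ : ℝ) * σ ^ 2 / 2 = (Δ : ℝ) * σ ^ 2 / 4 + (Δ : ℝ) * σ ^ 2 / 4 by ring,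
        Real.exp_add, ← hE2, ← pow_two]
    have hw2' : exp (σ ^ 2 * (Δ : ℝ) / 2) = E2 ^ 2 := by
      rw [show σ ^ 2 * (Δ : ℝ) / 2 = (Δ : ℝ) * σ ^ 2 / 2 by ring, hw2]
    have hw4 : exp ((Δ : ℝ) * σ ^ 2) = E2 ^ 4 := by
      rw [show (Δ : ℝ) * σ ^ 2 = ((Δ : ℝ) * σ ^ 2 / 4 + (Δ : ℝ) * σ ^ 2 / 4)
          + ((Δ : ℝ) * σ ^ 2 / 4 + (Δ : ℝ) * σ ^ 2 / 4) by ring,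
        Real.exp_add, Real.exp_add, ← hE2]
      ring
    have hw4' : exp (σ ^ 2 * (Δ : ℝ)) = E2 ^ 4 := by
      rw [show σ ^ 2 * (Δ : ℝ) = (Δ : ℝ) * σ ^ 2 by ring, hw4]
    -- constants in terms of E1 E2
    have ra : a = (E1 ^ 2)⁻¹ := by rw [haE, Real.exp_neg, hu2]
    have rb : bB = μ' * (Δ : ℝ) * E1⁻¹ := by
      rw [hbBE, Real.exp_neg, ← hE1, hb0]
    have rq : qq = E2 ^ 4 * (E1 ^ 4)⁻¹ := by
      rw [hqqE, sub_eq_add_neg, Real.exp_add, Real.exp_neg, hu4, hw4']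
    have rc : cc = 2 * (μ' * (Δ : ℝ)) * (E2 ^ 2 * (E1 ^ 3)⁻¹) := by
      rw [hccE, sub_eq_add_neg, Real.exp_add, Real.exp_neg, hu3, hw2', hb0]
    have rd : dd = (μ' * (Δ : ℝ)) ^ 2 * (E2 ^ 2 * (E1 ^ 2)⁻¹) := by
      rw [hddE, sub_eq_add_neg, Real.exp_add, Real.exp_neg, hu2, hw2', hb0]
    -- nonvanishing denominators
    have hE1ne : E1 ≠ 0 := ne_of_gt hE1pos
    have hE2ne : E2 ≠ 0 := ne_of_gt hE2pos
    have h1lt : 1 < E1 ^ 2 := one_lt_pow₀ hE1gt1 (by norm_num)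
    have hne1 : E1 ^ 2 - 1 ≠ 0 := sub_ne_zero.mpr h1lt.ne'
    have hE24lt : E2 ^ 4 < E1 ^ 4 := pow_lt_pow_left₀ hE2lt hE2pos.le (by norm_num)
    have hne2 : E2 ^ 4 - E1 ^ 4 ≠ 0 := sub_ne_zero.mpr hE24lt.ne
    have hne2' : E1 ^ 4 - E2 ^ 4 ≠ 0 := sub_ne_zero.mpr hE24lt.ne'
    have hnea : 1 - a ≠ 0 := sub_ne_zero.mpr ha1.ne'
    have hneq : 1 - qq ≠ 0 := sub_ne_zero.mpr hqq1.ne'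
    rw [hu2, hu4, hw2, hw4, ra, rb, rq, rc, rd]
    field_simp
    ring
  rw [← hval]
  exact hfinal
end
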